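/- Let n, D, L, K be positive integers with 2L ≤ D, let ω_1, …, ω_L ∈ ℝ^n, σ > 0, W a real D×2L matrix with WᵀW = 1, Φ a real D×K matrix, I ∈ ℝ^D, and T(s) = W R(s) Wᵀ where R(s) is the 2L×2L block-diagonal rotation matrix with blocks of angles ω_l·s. Let π : [0,2π]^n → ℝ be a continuous, strictly positive prior density. Define f : ℝ^K → ℝ by f(α) = −log ∫_{[0,2π]^n} exp(−‖I − T(s)Φα‖₂²/(2σ²)) π(s) ds, let h(s,α) = −(1/σ²) Φᵀ T(s)ᵀ (I − T(s)Φα) ∈ ℝ^K, and let p_α(s) be the posterior density proportional to exp(−‖I − T(s)Φα‖₂²/(2σ²)) π(s) on [0,2π]^n. Then f is twice differentiable, and its Hessian matrix at every α ∈ ℝ^K equals (1/σ²) Φᵀ W Wᵀ Φ − Cov_{s∼p_α}(h(s,α)), where Cov_{s∼p_α}(h) = ∫ p_α(s) h(s,α) h(s,α)ᵀ ds − (∫ p_α(s) h(s,α) ds)(∫ p_α(s) h(s,α) ds)ᵀ. -/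

import Mathlib

open Matrix Real MeasureTheory

/-- The 2×2 rotation matrix of angle `θ`. -/
noncomputable def rotBlock (θ : ℝ) : Matrix (Fin 2) (Fin 2) ℝ :=
  !![Real.cos θ, -Real.sin θ; Real.sin θ, Real.cos θ]

/-- The 2L×2L block-diagonal matrix whose l-th 2×2 diagonal block is the
rotation matrix of angle `ω l · s`. -/
noncomputable def blockRot {n L : ℕ} (ω : Fin L → Fin n → ℝ) (s : Fin n → ℝ) :
    Matrix (Fin L × Fin 2) (Fin L × Fin 2) ℝ :=
  fun p q => if p.1 = q.1 then rotBlock (∑ i, ω p.1 i * s i) p.2 q.2 else 0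

lemma rot_orth (θ : ℝ) (a c : Fin 2) :
    ∑ t : Fin 2, rotBlock θ t a * rotBlock θ t c = if a = c then 1 else 0 := by
  fin_cases a <;> fin_cases c <;>
    simp [rotBlock, Fin.sum_univ_two] <;>
    nlinarith [Real.sin_sq_add_cos_sq θ]

lemma blockRot_orth {n L : ℕ} (ω : Fin L → Fin n → ℝ) (s : Fin n → ℝ) :
    (blockRot ω s)ᵀ * blockRot ω s = 1 := by
  ext p q
  obtain ⟨pl, pt⟩ := p
  obtain ⟨ql, qt⟩ := q
  rw [Matrix.mul_apply, Fintype.sum_prod_type]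
  simp only [Matrix.transpose_apply, blockRot]
  by_cases hpq : pl = ql
  · subst hpq
    rw [Finset.sum_eq_single pl]
    · simp only [if_true, eq_self_iff_true]
      rw [rot_orth]
      simp [Matrix.one_apply, Prod.ext_iff]
    · intro l _ hl
      apply Finset.sum_eq_zero
      intro t _
      simp [if_neg hl]
    · simp
  · rw [Finset.sum_eq_zero, Matrix.one_apply_ne (by simp [Prod.ext_iff, hpq])]
    intro l _
    apply Finset.sum_eq_zero
    intro t _
    by_cases hl : l = pl
    · subst hl
      simp [if_neg (fun hh => hpq hh)]
    · simp [if_neg hl]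

section Aux

variable {K : ℕ} {S : Type*} [MeasurableSpace S]

/-- The continuous linear map `x ↦ v ⬝ᵥ x`. -/
noncomputable def dotCLM (v : Fin K → ℝ) : (Fin K → ℝ) →L[ℝ] ℝ :=
  ∑ i, v i • ContinuousLinearMap.proj i

lemma dotCLM_apply (v x : Fin K → ℝ) : dotCLM v x = v ⬝ᵥ x := by
  simp [dotCLM, dotProduct, ContinuousLinearMap.sum_apply]

lemma dotCLM_norm_le (v : Fin K → ℝ) : ‖dotCLM v‖ ≤ K * ‖v‖ := by
  refine ContinuousLinearMap.opNorm_le_bound _ (by positivity) fun x => ?_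
  rw [dotCLM_apply]
  calc ‖v ⬝ᵥ x‖ ≤ ∑ i, ‖v i * x i‖ := Finset.abs_sum_le_sum_abs _ _
    _ ≤ ∑ _i : Fin K, ‖v‖ * ‖x‖ := Finset.sum_le_sum fun i _ => by
        rw [norm_mul]
        exact mul_le_mul (norm_le_pi_norm v i) (norm_le_pi_norm x i) (norm_nonneg _)
          (norm_nonneg _)
    _ = K * ‖v‖ * ‖x‖ := by simp [Finset.sum_const, Finset.card_univ]; ring

lemma abs_dot_le (v x : Fin K → ℝ) : |v ⬝ᵥ x| ≤ (K * ‖v‖) * ‖x‖ := by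
  rw [← dotCLM_apply]
  exact (dotCLM v).le_of_opNorm_le (dotCLM_norm_le v) x

lemma continuous_dotCLM : Continuous (fun v : Fin K → ℝ => dotCLM v) := by
  unfold dotCLM
  exact continuous_finset_sum _ fun i _ => (continuous_apply i).smul continuous_const

variable (μ : Measure S) [IsFiniteMeasure μ] (b : S → Fin K → ℝ)

/-- integrands that are a.e. bounded and measurable -/
def Pgood (u : S → ℝ) : Prop :=
  AEStronglyMeasurable u μ ∧ ∃ C : ℝ, ∀ᵐ s ∂μ, |u s| ≤ C

variable {μ b}

lemma Pgood.mul_b {u : S → ℝ} (hb : AEStronglyMeasurable b μ) {Cb : ℝ} (hCb : ∀ᵐ s ∂μ, ‖b s‖ ≤ Cb)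
    (hu : Pgood μ u) (i : Fin K) : Pgood μ (fun s => u s * b s i) := by
  obtain ⟨hum, C, hC⟩ := hu
  refine ⟨hum.mul ((continuous_apply i).comp_aestronglyMeasurable hb), |C| * |Cb|, ?_⟩
  filter_upwards [hC, hCb] with s h1 h2
  rw [abs_mul]
  have h3 : |b s i| ≤ |Cb| := le_trans (norm_le_pi_norm (b s) i) (h2.trans (le_abs_self _))
  exact mul_le_mul (h1.trans (le_abs_self _)) h3 (abs_nonneg _) (abs_nonneg _)

lemma J_integrable (hb : AEStronglyMeasurable b μ) {Cb : ℝ} (hCb : ∀ᵐ s ∂μ, ‖b s‖ ≤ Cb)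
    {u : S → ℝ} (hu : Pgood μ u) (α : Fin K → ℝ) :
    Integrable (fun s => Real.exp (b s ⬝ᵥ α) * u s) μ := by
  obtain ⟨hum, C, hC⟩ := hu
  have hcontd : Continuous fun v : Fin K → ℝ => Real.exp (v ⬝ᵥ α) :=
    Real.continuous_exp.comp (continuous_finset_sum _ fun i _ =>
      (continuous_apply i).mul continuous_const)
  refine Integrable.mono' (integrable_const (Real.exp ((K * |Cb|) * ‖α‖) * |C|))
    ((hcontd.comp_aestronglyMeasurable hb).mul hum) ?_
  filter_upwards [hC, hCb] with s h1 h2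
  rw [norm_mul, Real.norm_eq_abs (Real.exp _), abs_of_pos (Real.exp_pos _)]
  refine mul_le_mul ?_ (h1.trans (le_abs_self _)) (abs_nonneg _) (Real.exp_pos _).le
  refine Real.exp_le_exp.2 ?_
  calc b s ⬝ᵥ α ≤ |b s ⬝ᵥ α| := le_abs_self _
    _ ≤ (K * ‖b s‖) * ‖α‖ := abs_dot_le _ _
    _ ≤ (K * |Cb|) * ‖α‖ := by
        have : ‖b s‖ ≤ |Cb| := h2.trans (le_abs_self _)
        have hK : (0:ℝ) ≤ K := Nat.cast_nonneg _
        exact mul_le_mul_of_nonneg_right (mul_le_mul_of_nonneg_left this hK) (norm_nonneg α)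

lemma J_hasFDerivAt (hb : AEStronglyMeasurable b μ) {Cb : ℝ} (hCb : ∀ᵐ s ∂μ, ‖b s‖ ≤ Cb)
    {u : S → ℝ} (hu : Pgood μ u) (α₀ : Fin K → ℝ) :
    HasFDerivAt (fun α => ∫ s, Real.exp (b s ⬝ᵥ α) * u s ∂μ)
      (∑ i, (∫ s, Real.exp (b s ⬝ᵥ α₀) * (u s * b s i) ∂μ) •
        (ContinuousLinearMap.proj i : (Fin K → ℝ) →L[ℝ] ℝ)) α₀ := by
  obtain ⟨hum, C, hC⟩ := id hu
  have hCb' : ∀ᵐ s ∂μ, ‖b s‖ ≤ |Cb| := hCb.mono fun s h => h.trans (le_abs_self _)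
  have hC' : ∀ᵐ s ∂μ, |u s| ≤ |C| := hC.mono fun s h => h.trans (le_abs_self _)
  have hK : (0:ℝ) ≤ K := Nat.cast_nonneg _
  set F : (Fin K → ℝ) → S → ℝ := fun α s => Real.exp (b s ⬝ᵥ α) * u s with hF
  set F' : (Fin K → ℝ) → S → (Fin K → ℝ) →L[ℝ] ℝ :=
    fun α s => (Real.exp (b s ⬝ᵥ α) * u s) • dotCLM (b s) with hF'
  have hdiff : ∀ (s : S) (x : Fin K → ℝ), HasFDerivAt (fun α => F α s) (F' x s) x := by
    intro s x
    have h1 : HasFDerivAt (fun α : Fin K → ℝ => b s ⬝ᵥ α) (dotCLM (b s)) x :=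
      (dotCLM (b s)).hasFDerivAt.congr_of_eventuallyEq
        (Filter.Eventually.of_forall fun y => (dotCLM_apply _ _).symm)
    have h3 := h1.exp.mul_const (u s)
    rw [smul_smul, mul_comm (u s)] at h3
    exact h3
  have hmeas : ∀ x, AEStronglyMeasurable (F x) μ := by
    intro x
    have hcontd : Continuous fun v : Fin K → ℝ => Real.exp (v ⬝ᵥ x) :=
      Real.continuous_exp.comp (continuous_finset_sum _ fun i _ =>
        (continuous_apply i).mul continuous_const)
    exact (hcontd.comp_aestronglyMeasurable hb).mul hum
  have hF'meas : AEStronglyMeasurable (F' α₀) μ := by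
    have hcontd : Continuous fun v : Fin K → ℝ => Real.exp (v ⬝ᵥ α₀) :=
      Real.continuous_exp.comp (continuous_finset_sum _ fun i _ =>
        (continuous_apply i).mul continuous_const)
    exact ((hcontd.comp_aestronglyMeasurable hb).mul hum).smul
      (continuous_dotCLM.comp_aestronglyMeasurable hb)
  have hbnd : ∀ᵐ s ∂μ, ∀ x ∈ Metric.ball α₀ 1, ‖F' x s‖ ≤
      Real.exp ((K * |Cb|) * (‖α₀‖ + 1)) * |C| * (K * |Cb|) := by
    filter_upwards [hC', hCb'] with s h1 h2
    intro x hx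
    have hxn : ‖x‖ ≤ ‖α₀‖ + 1 := by
      have h4 := mem_ball_iff_norm.mp hx
      have h5 := norm_sub_norm_le x α₀
      linarith
    have e1 : Real.exp (b s ⬝ᵥ x) ≤ Real.exp ((K * |Cb|) * (‖α₀‖ + 1)) := by
      refine Real.exp_le_exp.2 ?_
      calc b s ⬝ᵥ x ≤ |b s ⬝ᵥ x| := le_abs_self _
        _ ≤ (K * ‖b s‖) * ‖x‖ := abs_dot_le _ _
        _ ≤ (K * |Cb|) * (‖α₀‖ + 1) :=
          mul_le_mul (mul_le_mul_of_nonneg_left h2 hK) hxn (norm_nonneg _)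
            (by positivity)
    have e2 : ‖dotCLM (b s)‖ ≤ K * |Cb| :=
      (dotCLM_norm_le _).trans (mul_le_mul_of_nonneg_left h2 hK)
    show ‖(Real.exp (b s ⬝ᵥ x) * u s) • dotCLM (b s)‖ ≤ _
    refine le_trans (ContinuousLinearMap.opNorm_smul_le _ _) ?_
    rw [Real.norm_eq_abs, abs_mul, abs_of_pos (Real.exp_pos _)]
    exact mul_le_mul (mul_le_mul e1 h1 (abs_nonneg _) (Real.exp_pos _).le) e2
      (norm_nonneg _) (by positivity)
  have key := hasFDerivAt_integral_of_dominated_of_fderiv_le (μ := μ) (F := F) (F' := F')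
    (x₀ := α₀) (bound := fun _ => Real.exp ((K * |Cb|) * (‖α₀‖ + 1)) * |C| * (K * |Cb|))
    (Metric.ball_mem_nhds α₀ one_pos) (Filter.Eventually.of_forall hmeas) (J_integrable hb hCb hu α₀) hF'meas hbnd
    (integrable_const _)
    (Filter.Eventually.of_forall fun s => fun x _ => hdiff s x)
  have hF'int : Integrable (F' α₀) μ := by
    refine Integrable.mono' (integrable_const
      (Real.exp ((K * |Cb|) * (‖α₀‖ + 1)) * |C| * (K * |Cb|))) hF'meas ?_
    filter_upwards [hbnd] with s hs
    exact hs α₀ (Metric.mem_ball_self one_pos)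
  have heq : (∫ s, F' α₀ s ∂μ) = ∑ i, (∫ s, Real.exp (b s ⬝ᵥ α₀) * (u s * b s i) ∂μ) •
      (ContinuousLinearMap.proj i : (Fin K → ℝ) →L[ℝ] ℝ) := by
    refine ContinuousLinearMap.ext fun v => ?_
    rw [ContinuousLinearMap.integral_apply hF'int]
    have hR : (∑ i, (∫ s, Real.exp (b s ⬝ᵥ α₀) * (u s * b s i) ∂μ) •
        (ContinuousLinearMap.proj i : (Fin K → ℝ) →L[ℝ] ℝ)) v
        = ∑ i, ∫ s, Real.exp (b s ⬝ᵥ α₀) * (u s * b s i) * v i ∂μ := by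
      rw [ContinuousLinearMap.sum_apply]
      refine Finset.sum_congr rfl fun i _ => ?_
      rw [ContinuousLinearMap.smul_apply, ContinuousLinearMap.proj_apply,
        smul_eq_mul, ← integral_mul_const]
    rw [hR, ← integral_finset_sum]
    · refine integral_congr_ae (Filter.Eventually.of_forall fun s => ?_)
      simp only [hF', ContinuousLinearMap.smul_apply, smul_eq_mul, dotCLM_apply, dotProduct,
        Finset.mul_sum]
      exact Finset.sum_congr rfl fun i _ => by ring
    · exact fun i _ => (J_integrable hb hCb (Pgood.mul_b hb hCb hu i) α₀).mul_const (v i)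
  rw [← heq]
  exact key

lemma J_contDiff (hb : AEStronglyMeasurable b μ) {Cb : ℝ} (hCb : ∀ᵐ s ∂μ, ‖b s‖ ≤ Cb)
    (m : ℕ) : ∀ {u : S → ℝ}, Pgood μ u →
    ContDiff ℝ m (fun α => ∫ s, Real.exp (b s ⬝ᵥ α) * u s ∂μ) := by
  induction m with
  | zero =>
    intro u hu
    rw [show ((0 : ℕ) : WithTop ℕ∞) = 0 by norm_cast, contDiff_zero]
    exact Differentiable.continuous fun α : Fin K → ℝ => (J_hasFDerivAt hb hCb hu α).differentiableAt
  | succ m ih =>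
    intro u hu
    rw [show ((m + 1 : ℕ) : WithTop ℕ∞) = (m : WithTop ℕ∞) + 1 by push_cast; rfl,
      contDiff_succ_iff_fderiv]
    refine ⟨fun α => (J_hasFDerivAt hb hCb hu α).differentiableAt, ?_, ?_⟩
    · intro hω
      exact absurd hω (by simp)
    · have : fderiv ℝ (fun α => ∫ s, Real.exp (b s ⬝ᵥ α) * u s ∂μ)
          = fun α₀ => ∑ i, (∫ s, Real.exp (b s ⬝ᵥ α₀) * (u s * b s i) ∂μ) •
            (ContinuousLinearMap.proj i : (Fin K → ℝ) →L[ℝ] ℝ) :=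
        funext fun α₀ => (J_hasFDerivAt hb hCb hu α₀).fderiv
      rw [this]
      exact ContDiff.sum fun i _ =>
        (ih (Pgood.mul_b hb hCb hu i)).smul contDiff_const

end Aux

set_option maxHeartbeats 2000000 in
theorem stmt_15 (n D L K : ℕ) (hn : 0 < n) (hD : 0 < D) (hL : 0 < L) (hK : 0 < K)
    (hDL : 2 * L ≤ D)
    (ω : Fin L → Fin n → ℝ) (σ : ℝ) (hσ : 0 < σ)
    (W : Matrix (Fin D) (Fin L × Fin 2) ℝ) (hW : Wᵀ * W = 1)
    (Φ : Matrix (Fin D) (Fin K) ℝ) (I : Fin D → ℝ)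
    (T : (Fin n → ℝ) → Matrix (Fin D) (Fin D) ℝ)
    (hT : ∀ s, T s = W * blockRot ω s * Wᵀ)
    (Kset : Set (Fin n → ℝ))
    (hKset : Kset = Set.univ.pi fun _ : Fin n => Set.Icc (0 : ℝ) (2 * Real.pi))
    (prior : (Fin n → ℝ) → ℝ)
    (hprior_cont : ContinuousOn prior Kset)
    (hprior_pos : ∀ s ∈ Kset, 0 < prior s)
    (Z : (Fin K → ℝ) → ℝ)
    (hZ : Z = fun α => ∫ s in Kset,
      Real.exp (-(∑ i, (I i - (T s * Φ).mulVec α i) ^ 2) / (2 * σ ^ 2)) * prior s)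
    (f : (Fin K → ℝ) → ℝ)
    (hf : f = fun α => -Real.log (Z α))
    (h : (Fin n → ℝ) → (Fin K → ℝ) → Fin K → ℝ)
    (hh : ∀ s α, h s α =
      -((1 / σ ^ 2) • Φᵀ.mulVec ((T s)ᵀ.mulVec (I - (T s * Φ).mulVec α))))
    (p : (Fin K → ℝ) → (Fin n → ℝ) → ℝ)
    (hp : ∀ α s, p α s =
      Real.exp (-(∑ i, (I i - (T s * Φ).mulVec α i) ^ 2) / (2 * σ ^ 2)) * prior s / Z α) :
    ContDiff ℝ 2 f ∧
      ∀ (α : Fin K → ℝ) (i j : Fin K),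
        fderiv ℝ (fderiv ℝ f) α (Pi.single i 1 : Fin K → ℝ) (Pi.single j 1 : Fin K → ℝ) =
          (((1 / σ ^ 2) • (Φᵀ * W * Wᵀ * Φ) : Matrix (Fin K) (Fin K) ℝ) i j) -
            ((∫ s in Kset, p α s * (h s α i * h s α j)) -
              (∫ s in Kset, p α s * h s α i) * (∫ s in Kset, p α s * h s α j)) := by
  have hσ2 : σ ^ 2 ≠ 0 := by positivity
  -- basic facts about Kset
  have hKmeas : MeasurableSet Kset := by
    rw [hKset]; exact MeasurableSet.univ_pi fun _ => measurableSet_Icc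
  have hKcomp : IsCompact Kset := by
    rw [hKset]; exact isCompact_univ_pi fun _ => isCompact_Icc
  haveI : IsFiniteMeasure (volume.restrict Kset) :=
    ⟨by rw [Measure.restrict_apply_univ]; exact hKcomp.measure_lt_top⟩
  -- the constant matrix and the linear term
  set A : Matrix (Fin K) (Fin K) ℝ := (1 / σ ^ 2) • (Φᵀ * W * Wᵀ * Φ) with hA
  set bb : (Fin n → ℝ) → (Fin K → ℝ) := fun s => (1 / σ ^ 2) • (Φᵀ *ᵥ ((T s)ᵀ *ᵥ I)) with hbb
  have hTT : ∀ s, (T s)ᵀ * T s = W * Wᵀ := by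
    intro s
    rw [hT s]
    simp only [Matrix.transpose_mul, Matrix.transpose_transpose, Matrix.mul_assoc]
    rw [show Wᵀ * (W * (blockRot ω s * Wᵀ)) = blockRot ω s * Wᵀ by
      rw [← Matrix.mul_assoc, hW, Matrix.one_mul]]
    rw [← Matrix.mul_assoc (blockRot ω s)ᵀ, blockRot_orth, Matrix.one_mul]
  have hQ : ∀ s, (T s * Φ)ᵀ * (T s * Φ) = Φᵀ * W * Wᵀ * Φ := by
    intro s
    rw [Matrix.transpose_mul, Matrix.mul_assoc, ← Matrix.mul_assoc (T s)ᵀ, hTT,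
      Matrix.mul_assoc (Φᵀ), ← Matrix.mul_assoc, ← Matrix.mul_assoc]
  have hAsym : ∀ i j, A i j = A j i := by
    have : Aᵀ = A := by
      rw [hA, Matrix.transpose_smul]
      congr 1
      simp only [Matrix.transpose_mul, Matrix.transpose_transpose, Matrix.mul_assoc]
    intro i j
    conv_lhs => rw [← this]
    rfl
  -- h in terms of A and bb
  have h_eq : ∀ s α, h s α = A *ᵥ α - bb s := by
    intro s α
    rw [hh]
    rw [Matrix.mulVec_sub, Matrix.mulVec_sub, smul_sub, neg_sub]
    congr 1
    rw [Matrix.mulVec_mulVec, Matrix.mulVec_mulVec, ← Matrix.mul_assoc,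
      ← Matrix.transpose_mul, Matrix.mul_assoc, hQ, hA, Matrix.smul_mulVec]
  -- the exponent identity
  have hSIG : ∀ s (α : Fin K → ℝ), (∑ i, (I i - (T s * Φ).mulVec α i) ^ 2)
      = I ⬝ᵥ I - 2 * (σ ^ 2 * (bb s ⬝ᵥ α)) + σ ^ 2 * (α ⬝ᵥ (A *ᵥ α)) := by
    intro s α
    have hIu : I ⬝ᵥ ((T s * Φ) *ᵥ α) = σ ^ 2 * (bb s ⬝ᵥ α) := by
      rw [Matrix.dotProduct_mulVec, ← Matrix.mulVec_transpose, Matrix.transpose_mul,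
        ← Matrix.mulVec_mulVec]
      have : Φᵀ *ᵥ ((T s)ᵀ *ᵥ I) = σ ^ 2 • bb s := by
        rw [hbb]
        rw [smul_smul]
        rw [mul_one_div, div_self hσ2, one_smul]
      rw [this, smul_dotProduct, smul_eq_mul]
    have huu : ((T s * Φ) *ᵥ α) ⬝ᵥ ((T s * Φ) *ᵥ α) = σ ^ 2 * (α ⬝ᵥ (A *ᵥ α)) := by
      rw [Matrix.dotProduct_mulVec ((T s * Φ) *ᵥ α), ← Matrix.mulVec_transpose,
        Matrix.mulVec_mulVec, hQ]
      have hQA : Φᵀ * W * Wᵀ * Φ = σ ^ 2 • A := by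
        rw [hA, smul_smul, mul_one_div, div_self hσ2, one_smul]
      rw [hQA, Matrix.smul_mulVec, smul_dotProduct, smul_eq_mul,
        dotProduct_comm]
    calc ∑ i, (I i - (T s * Φ).mulVec α i) ^ 2
        = (I - (T s * Φ) *ᵥ α) ⬝ᵥ (I - (T s * Φ) *ᵥ α) := by
          simp [dotProduct, sq]
      _ = I ⬝ᵥ I - I ⬝ᵥ ((T s * Φ) *ᵥ α) -
          (((T s * Φ) *ᵥ α) ⬝ᵥ I - ((T s * Φ) *ᵥ α) ⬝ᵥ ((T s * Φ) *ᵥ α)) := by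
          rw [sub_dotProduct, dotProduct_sub, dotProduct_sub]
      _ = I ⬝ᵥ I - 2 * (σ ^ 2 * (bb s ⬝ᵥ α)) + σ ^ 2 * (α ⬝ᵥ (A *ᵥ α)) := by
          rw [dotProduct_comm ((T s * Φ) *ᵥ α) I, hIu, huu]; ring
  set c0 : ℝ := (I ⬝ᵥ I) / (2 * σ ^ 2) with hc0
  set qf : (Fin K → ℝ) → ℝ := fun α => (1 / 2) * (α ⬝ᵥ (A *ᵥ α)) with hqf
  have hexp : ∀ s (α : Fin K → ℝ),
      -(∑ i, (I i - (T s * Φ).mulVec α i) ^ 2) / (2 * σ ^ 2)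
        = (-c0 - qf α) + bb s ⬝ᵥ α := by
    intro s α
    rw [hSIG, hc0, hqf]
    field_simp
    ring
  -- the reduced partition function
  set G : (Fin K → ℝ) → ℝ := fun α => ∫ s in Kset, Real.exp (bb s ⬝ᵥ α) * prior s with hG
  have hGval : ∀ α, G α = ∫ s in Kset, Real.exp (bb s ⬝ᵥ α) * prior s := fun α => by
    rw [hG]
  have hZ' : ∀ α, Z α = ∫ s in Kset,
      Real.exp (-(∑ i, (I i - (T s * Φ).mulVec α i) ^ 2) / (2 * σ ^ 2)) * prior s :=
    fun α => by rw [hZ]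
  have hZeq : ∀ α, Z α = Real.exp (-c0 - qf α) * G α := by
    intro α
    rw [hZ', hGval, ← integral_const_mul]
    refine integral_congr_ae (Filter.Eventually.of_forall fun s => ?_)
    show Real.exp (-(∑ i, (I i - (T s * Φ).mulVec α i) ^ 2) / (2 * σ ^ 2)) * prior s
      = Real.exp (-c0 - qf α) * (Real.exp (bb s ⬝ᵥ α) * prior s)
    rw [hexp s α, Real.exp_add]
    ring
  -- continuity and boundedness of bb
  have hblockcont : ∀ c a : Fin L × Fin 2, Continuous fun s => blockRot ω s c a := by
    intro c a
    unfold blockRot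
    by_cases hca : c.1 = a.1
    · simp only [if_pos hca]
      have hθ : Continuous fun s : Fin n → ℝ => ∑ i, ω c.1 i * s i :=
        continuous_finset_sum _ fun i _ => continuous_const.mul (continuous_apply i)
      rcases c with ⟨cl, ct⟩
      rcases a with ⟨al, at'⟩
      fin_cases ct <;> fin_cases at' <;> simp [rotBlock] <;>
        first
          | exact Real.continuous_cos.comp hθ
          | exact Real.continuous_sin.comp hθ
          | exact (Real.continuous_sin.comp hθ).neg
    · simp only [if_neg hca]
      exact continuous_const
  have hTcont : ∀ i j : Fin D, Continuous fun s => T s i j := by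
    intro i j
    have hrw : (fun s => T s i j)
        = fun s => ∑ a, (∑ c, W i c * blockRot ω s c a) * Wᵀ a j := by
      funext s
      rw [hT s]
      simp [Matrix.mul_apply]
    rw [hrw]
    exact continuous_finset_sum _ fun a _ =>
      (continuous_finset_sum _ fun c _ => continuous_const.mul (hblockcont c a)).mul
        continuous_const
  have hbbcont : Continuous bb := by
    rw [hbb]
    refine continuous_pi fun k => ?_
    have hrw : (fun s => ((1 / σ ^ 2) • (Φᵀ *ᵥ ((T s)ᵀ *ᵥ I))) k)
        = fun s => (1 / σ ^ 2) * ∑ d, Φ d k * (∑ e, T s e d * I e) := by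
      funext s
      simp only [Pi.smul_apply, smul_eq_mul]
      congr 1
    rw [hrw]
    exact continuous_const.mul (continuous_finset_sum _ fun d _ =>
      continuous_const.mul (continuous_finset_sum _ fun e _ =>
        (hTcont e d).mul continuous_const))
  have hbbmeas : AEStronglyMeasurable bb (volume.restrict Kset) :=
    hbbcont.aestronglyMeasurable
  obtain ⟨Cb, hCbset⟩ := hKcomp.exists_bound_of_continuousOn hbbcont.continuousOn
  have hCb : ∀ᵐ s ∂(volume.restrict Kset), ‖bb s‖ ≤ Cb :=
    (ae_restrict_iff' hKmeas).2 (Filter.Eventually.of_forall hCbset)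
  -- prior is a good integrand
  have hPprior : Pgood (volume.restrict Kset) prior := by
    refine ⟨hprior_cont.aestronglyMeasurable hKmeas, ?_⟩
    obtain ⟨C, hC⟩ := hKcomp.exists_bound_of_continuousOn hprior_cont
    exact ⟨C, (ae_restrict_iff' hKmeas).2 (Filter.Eventually.of_forall hC)⟩
  have hPmul : ∀ j, Pgood (volume.restrict Kset) (fun s => prior s * bb s j) :=
    fun j => Pgood.mul_b hbbmeas hCb hPprior j
  have hPmul2 : ∀ j i, Pgood (volume.restrict Kset)
      (fun s => (prior s * bb s j) * bb s i) :=
    fun j i => Pgood.mul_b hbbmeas hCb (hPmul j) i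
  -- positivity of G
  have Gpos : ∀ α, 0 < G α := by
    intro α
    have hne : Kset.Nonempty := by
      refine ⟨fun _ => 0, ?_⟩
      rw [hKset]
      intro i _
      exact ⟨le_refl 0, by positivity⟩
    obtain ⟨sm, hsm, hmin⟩ := hKcomp.exists_isMinOn hne hprior_cont
    have hmπ : 0 < prior sm := hprior_pos sm hsm
    set δ : ℝ := Real.exp (-((K : ℝ) * |Cb| * ‖α‖)) * prior sm with hδ
    have hδpos : 0 < δ := mul_pos (Real.exp_pos _) hmπ
    have hle : ∀ s ∈ Kset, δ ≤ Real.exp (bb s ⬝ᵥ α) * prior s := by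
      intro s hs
      have h1 : Real.exp (-((K : ℝ) * |Cb| * ‖α‖)) ≤ Real.exp (bb s ⬝ᵥ α) := by
        refine Real.exp_le_exp.2 ?_
        have h2 : |bb s ⬝ᵥ α| ≤ (K : ℝ) * |Cb| * ‖α‖ := by
          refine (abs_dot_le _ _).trans ?_
          have hb := (hCbset s hs).trans (le_abs_self Cb)
          have hK0 : (0 : ℝ) ≤ K := Nat.cast_nonneg _
          exact mul_le_mul_of_nonneg_right (mul_le_mul_of_nonneg_left hb hK0)
            (norm_nonneg _)
        linarith [neg_abs_le (bb s ⬝ᵥ α)]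
      exact mul_le_mul h1 (hmin hs) hmπ.le (Real.exp_pos _).le
    have hKvolpos : 0 < (volume Kset).toReal := by
      refine ENNReal.toReal_pos ?_ hKcomp.measure_lt_top.ne
      rw [hKset, volume_pi_pi]
      refine Finset.prod_ne_zero_iff.2 fun i _ => ?_
      rw [Real.volume_Icc]
      simp only [ne_eq, ENNReal.ofReal_eq_zero, not_le]
      have := Real.pi_pos
      linarith
    have hint : IntegrableOn (fun s => Real.exp (bb s ⬝ᵥ α) * prior s) Kset volume :=
      J_integrable hbbmeas hCb hPprior α
    have := setIntegral_ge_of_const_le hKmeas hKcomp.measure_lt_top.ne hle hint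
    calc (0 : ℝ) < δ * (volume Kset).toReal := mul_pos hδpos hKvolpos
      _ ≤ _ := (by rw [smul_eq_mul, mul_comm]; rfl : δ * (volume Kset).toReal = volume.real Kset • δ).trans_le this
  -- rewriting f
  have hfeq : f = fun α => c0 + qf α - Real.log (G α) := by
    rw [hf]
    funext α
    rw [hZeq α, Real.log_mul (Real.exp_ne_zero _) (Gpos α).ne', Real.log_exp]
    ring
  -- smoothness of qf
  have hqfC : ContDiff ℝ 2 qf := by
    have hrw : qf = fun α => (1 / 2) * ∑ i, α i * ∑ j, A i j * α j := by
      funext α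
      rw [hqf]
      simp [dotProduct, Matrix.mulVec]
    rw [hrw]
    refine contDiff_const.mul (ContDiff.sum fun i _ => ContDiff.mul ?_ ?_)
    · exact (ContinuousLinearMap.proj i : (Fin K → ℝ) →L[ℝ] ℝ).contDiff
    · exact ContDiff.sum fun j _ => contDiff_const.mul
        (ContinuousLinearMap.proj j : (Fin K → ℝ) →L[ℝ] ℝ).contDiff
  have hGC2 : ContDiff ℝ 2 G := by
    have := J_contDiff hbbmeas hCb 2 hPprior
    exact_mod_cast this
  have hfC2 : ContDiff ℝ 2 f := by
    rw [hfeq]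
    exact (contDiff_const.add hqfC).sub (hGC2.log fun α => (Gpos α).ne')
  refine ⟨hfC2, ?_⟩
  -- derivative of the parametric integrals
  set DJ : ((Fin n → ℝ) → ℝ) → (Fin K → ℝ) → ((Fin K → ℝ) →L[ℝ] ℝ) :=
    fun u α => ∑ i, (∫ s in Kset, Real.exp (bb s ⬝ᵥ α) * (u s * bb s i)) •
      (ContinuousLinearMap.proj i : (Fin K → ℝ) →L[ℝ] ℝ) with hDJ
  have hJder : ∀ {u : (Fin n → ℝ) → ℝ}, Pgood (volume.restrict Kset) u → ∀ α,
      HasFDerivAt (fun β => ∫ s in Kset, Real.exp (bb s ⬝ᵥ β) * u s) (DJ u α) α :=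
    fun {u} hu α => J_hasFDerivAt hbbmeas hCb hu α
  have hGder : ∀ α, HasFDerivAt G (DJ prior α) α := fun α => hJder hPprior α
  have hDJapply : ∀ (u : (Fin n → ℝ) → ℝ) (β : Fin K → ℝ) (k : Fin K),
      DJ u β (Pi.single k 1) = ∫ s in Kset, Real.exp (bb s ⬝ᵥ β) * (u s * bb s k) := by
    intro u β k
    rw [hDJ]
    simp only [ContinuousLinearMap.sum_apply, ContinuousLinearMap.smul_apply,
      ContinuousLinearMap.proj_apply, smul_eq_mul]
    rw [Finset.sum_eq_single k]
    · rw [Pi.single_eq_same, mul_one]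
    · intro l _ hl
      rw [Pi.single_eq_of_ne hl, mul_zero]
    · simp
  -- derivative of the quadratic form
  have hdotHasF : ∀ (v : Fin K → ℝ) (β : Fin K → ℝ),
      HasFDerivAt (fun γ : Fin K → ℝ => v ⬝ᵥ γ) (dotCLM v) β := fun v β =>
    (dotCLM v).hasFDerivAt.congr_of_eventuallyEq
      (Filter.Eventually.of_forall fun y => (dotCLM_apply _ _).symm)
  have hqf' : ∀ α, HasFDerivAt qf (dotCLM (A *ᵥ α)) α := by
    intro α
    have hterm : ∀ i : Fin K, HasFDerivAt (fun β : Fin K → ℝ => β i * (A i ⬝ᵥ β))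
        (α i • dotCLM (A i) + (A i ⬝ᵥ α) •
          (ContinuousLinearMap.proj i : (Fin K → ℝ) →L[ℝ] ℝ)) α := by
      intro i
      have h1 : HasFDerivAt (fun β : Fin K → ℝ => β i)
          (ContinuousLinearMap.proj i : (Fin K → ℝ) →L[ℝ] ℝ) α :=
        (ContinuousLinearMap.proj i : (Fin K → ℝ) →L[ℝ] ℝ).hasFDerivAt
      exact h1.mul (hdotHasF (A i) α)
    have hsum := HasFDerivAt.sum (fun i (_ : i ∈ Finset.univ) => hterm i)
    have hhalf := hsum.const_mul ((1 : ℝ)/2)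
    have hfun : qf = fun β : Fin K → ℝ => (1/2 : ℝ) * ∑ i, β i * (A i ⬝ᵥ β) := rfl
    rw [hfun]
    have hclm : ((1:ℝ)/2) • (∑ i, (α i • dotCLM (A i) + (A i ⬝ᵥ α) •
        (ContinuousLinearMap.proj i : (Fin K → ℝ) →L[ℝ] ℝ))) = dotCLM (A *ᵥ α) := by
      refine ContinuousLinearMap.ext fun v => ?_
      simp only [ContinuousLinearMap.smul_apply, ContinuousLinearMap.sum_apply,
        ContinuousLinearMap.add_apply, ContinuousLinearMap.proj_apply, dotCLM_apply,
        smul_eq_mul]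
      have e1 : ∑ i, α i * (A i ⬝ᵥ v) = ∑ i, (A i ⬝ᵥ α) * v i := by
        simp only [dotProduct, Finset.mul_sum, Finset.sum_mul]
        rw [Finset.sum_comm]
        refine Finset.sum_congr rfl fun i _ => Finset.sum_congr rfl fun j _ => ?_
        rw [hAsym j i]
        ring
      have e2 : (A *ᵥ α) ⬝ᵥ v = ∑ i, (A i ⬝ᵥ α) * v i := rfl
      rw [Finset.sum_add_distrib, e1, e2]
      ring
    rw [← hclm]
    exact hhalf.congr_of_eventuallyEq (Filter.Eventually.of_forall fun y => by simp only [Finset.sum_apply])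
  -- the first derivative of f
  have hf1 : ∀ α, HasFDerivAt f (dotCLM (A *ᵥ α) - (G α)⁻¹ • DJ prior α) α := by
    intro α
    rw [hfeq]
    exact ((hqf' α).const_add c0).sub ((hGder α).log (Gpos α).ne')
  have hfd : fderiv ℝ f = fun α => dotCLM (A *ᵥ α) - (G α)⁻¹ • DJ prior α :=
    funext fun α => (hf1 α).fderiv
  have hC1fd : ContDiff ℝ 1 (fderiv ℝ f) := by
    have h2 := hfC2
    rw [show (2 : WithTop ℕ∞) = 1 + 1 from by norm_num, contDiff_succ_iff_fderiv] at h2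
    exact h2.2.2
  intro α i j
  have hdiffα : DifferentiableAt ℝ (fderiv ℝ f) α :=
    (hC1fd.differentiable one_ne_zero) α
  have hstep : fderiv ℝ (fun y => (fderiv ℝ f y) (Pi.single j 1 : Fin K → ℝ)) α
      = (fderiv ℝ (fderiv ℝ f) α).flip (Pi.single j 1) := by
    rw [fderiv_clm_apply hdiffα (differentiableAt_const _)]
    simp
  have hswap : fderiv ℝ (fderiv ℝ f) α (Pi.single i 1) (Pi.single j 1)
      = fderiv ℝ (fun y => (fderiv ℝ f y) (Pi.single j 1 : Fin K → ℝ)) α (Pi.single i 1) := by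
    rw [hstep]
    simp [ContinuousLinearMap.flip_apply]
  have happly : (fun y => (fderiv ℝ f y) (Pi.single j 1 : Fin K → ℝ))
      = fun y => (A j ⬝ᵥ y) -
        (G y)⁻¹ * (∫ s in Kset, Real.exp (bb s ⬝ᵥ y) * (prior s * bb s j)) := by
    funext y
    simp only [hfd, ContinuousLinearMap.sub_apply, ContinuousLinearMap.smul_apply,
      smul_eq_mul]
    rw [hDJapply prior y j, dotCLM_apply, dotProduct_single, mul_one]
    rfl
  -- second derivative as explicit scalar derivative
  have hinv : HasFDerivAt (fun y => (G y)⁻¹) ((-(G α ^ 2)⁻¹) • DJ prior α) α :=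
    (hasDerivAt_inv (Gpos α).ne').comp_hasFDerivAt α (hGder α)
  have hsub : HasFDerivAt (fun y => (A j ⬝ᵥ y) -
      (G y)⁻¹ * (∫ s in Kset, Real.exp (bb s ⬝ᵥ y) * (prior s * bb s j)))
      (dotCLM (A j) - ((G α)⁻¹ • DJ (fun s => prior s * bb s j) α +
        (∫ s in Kset, Real.exp (bb s ⬝ᵥ α) * (prior s * bb s j)) •
          ((-(G α ^ 2)⁻¹) • DJ prior α))) α :=
    (hdotHasF (A j) α).sub (hinv.mul (hJder (hPmul j) α))
  rw [hswap, happly, hsub.fderiv]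
  simp only [ContinuousLinearMap.sub_apply, ContinuousLinearMap.add_apply,
    ContinuousLinearMap.smul_apply, smul_eq_mul]
  rw [hDJapply, hDJapply, dotCLM_apply, dotProduct_single, mul_one]
  -- now compute the posterior integrals
  have hppt : ∀ s, p α s = (G α)⁻¹ * (Real.exp (bb s ⬝ᵥ α) * prior s) := by
    intro s
    rw [hp α s, hZeq α, hexp s α, Real.exp_add, mul_assoc,
      mul_div_mul_left _ _ (Real.exp_ne_zero _), div_eq_inv_mul]
  have hIi : ∀ k : Fin K, (∫ s in Kset, p α s * h s α k)
      = (G α)⁻¹ * ((A *ᵥ α) k * G α -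
        (∫ s in Kset, Real.exp (bb s ⬝ᵥ α) * (prior s * bb s k))) := by
    intro k
    have hpt : ∀ s, p α s * h s α k = (G α)⁻¹ *
        ((A *ᵥ α) k * (Real.exp (bb s ⬝ᵥ α) * prior s) -
          Real.exp (bb s ⬝ᵥ α) * (prior s * bb s k)) := by
      intro s
      rw [hppt s, h_eq s α]
      simp only [Pi.sub_apply]
      ring
    simp only [hpt]
    rw [integral_const_mul, integral_sub ((J_integrable hbbmeas hCb hPprior α).const_mul _)
        (J_integrable hbbmeas hCb (hPmul k) α),
      integral_const_mul, ← hGval α]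
  have hIij : (∫ s in Kset, p α s * (h s α i * h s α j))
      = (G α)⁻¹ * ((((A *ᵥ α) i * (A *ᵥ α) j * G α -
          (A *ᵥ α) i * (∫ s in Kset, Real.exp (bb s ⬝ᵥ α) * (prior s * bb s j))) -
          (A *ᵥ α) j * (∫ s in Kset, Real.exp (bb s ⬝ᵥ α) * (prior s * bb s i))) +
          (∫ s in Kset, Real.exp (bb s ⬝ᵥ α) * ((prior s * bb s j) * bb s i))) := by
    have hpt : ∀ s, p α s * (h s α i * h s α j) = (G α)⁻¹ *
        ((((A *ᵥ α) i * (A *ᵥ α) j * (Real.exp (bb s ⬝ᵥ α) * prior s) -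
          (A *ᵥ α) i * (Real.exp (bb s ⬝ᵥ α) * (prior s * bb s j))) -
          (A *ᵥ α) j * (Real.exp (bb s ⬝ᵥ α) * (prior s * bb s i))) +
          Real.exp (bb s ⬝ᵥ α) * ((prior s * bb s j) * bb s i)) := by
      intro s
      rw [hppt s, h_eq s α]
      simp only [Pi.sub_apply]
      ring
    simp only [hpt]
    have h1 : Integrable (fun s => (A *ᵥ α) i * (A *ᵥ α) j *
        (Real.exp (bb s ⬝ᵥ α) * prior s)) (volume.restrict Kset) :=
      (J_integrable hbbmeas hCb hPprior α).const_mul _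
    have h2 : Integrable (fun s => (A *ᵥ α) i *
        (Real.exp (bb s ⬝ᵥ α) * (prior s * bb s j))) (volume.restrict Kset) :=
      (J_integrable hbbmeas hCb (hPmul j) α).const_mul _
    have h3 : Integrable (fun s => (A *ᵥ α) j *
        (Real.exp (bb s ⬝ᵥ α) * (prior s * bb s i))) (volume.restrict Kset) :=
      (J_integrable hbbmeas hCb (hPmul i) α).const_mul _
    have h4 : Integrable (fun s => Real.exp (bb s ⬝ᵥ α) *
        ((prior s * bb s j) * bb s i)) (volume.restrict Kset) :=
      J_integrable hbbmeas hCb (hPmul2 j i) α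
    have h12 : Integrable (fun s => (A *ᵥ α) i * (A *ᵥ α) j *
        (Real.exp (bb s ⬝ᵥ α) * prior s) - (A *ᵥ α) i *
        (Real.exp (bb s ⬝ᵥ α) * (prior s * bb s j))) (volume.restrict Kset) := h1.sub h2
    have h123 : Integrable (fun s => ((A *ᵥ α) i * (A *ᵥ α) j *
        (Real.exp (bb s ⬝ᵥ α) * prior s) - (A *ᵥ α) i *
        (Real.exp (bb s ⬝ᵥ α) * (prior s * bb s j))) - (A *ᵥ α) j *
        (Real.exp (bb s ⬝ᵥ α) * (prior s * bb s i))) (volume.restrict Kset) := h12.sub h3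
    rw [integral_const_mul, integral_add h123 h4, integral_sub h12 h3, integral_sub h1 h2,
      integral_const_mul, integral_const_mul, integral_const_mul, ← hGval α]
  -- finish by algebra
  rw [hIij, hIi i, hIi j, hAsym j i]
  have hGne : G α ≠ 0 := (Gpos α).ne'
  field_simp
  ring
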